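/- Let λ ∈ ℝ^N with M := ‖λ‖², let W : ℝ × ℝ → ℝ be differentiable, and set V(q) = W(λ·q, ‖q‖²). Write W₁ = ∂₁W(λ·q,‖q‖²) and W₂ = ∂₂W(λ·q,‖q‖²). Then ∇V(q) = W₁·λ + 2W₂·q, and the map Φ(q,p) = (q',p') with q' = ∇V(q) − p, p' = q satisfies: λ·p' = λ·q; ‖p'‖² = ‖q‖²; λ·q' = M·W₁ + 2(λ·q)·W₂ − λ·p; ‖q'‖² = M·W₁² + 4(λ·q)·W₁W₂ + 4‖q‖²·W₂² − 2(λ·p)·W₁ − 4(q·p)·W₂ + ‖p‖²; and q'·p' − M/2 = −(q·p − M/2) + (λ·q)·W₁ + 2‖q‖²·W₂ − M. In particular the evolution is closed in the six functions A₋ = λ·q, A₊ = λ·p, B₋ = ‖q‖², B₊ = ‖p‖², K = q·p − M/2, M. -/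

import Mathlib

open scoped RealInnerProductSpace

lemma grad_aux (N : ℕ) (lam : EuclideanSpace ℝ (Fin N)) (W : ℝ × ℝ → ℝ)
    (hW : Differentiable ℝ W) (q : EuclideanSpace ℝ (Fin N)) :
    gradient (fun q : EuclideanSpace ℝ (Fin N) => W (⟪lam, q⟫, ⟪q, q⟫)) q
      = (fderiv ℝ W (⟪lam, q⟫, ⟪q, q⟫) (1, 0)) • lam
        + (2 * fderiv ℝ W (⟪lam, q⟫, ⟪q, q⟫) (0, 1)) • q := by
  set D := fderiv ℝ W (⟪lam, q⟫, ⟪q, q⟫) with hDdef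
  have h1 : HasFDerivAt (fun x : EuclideanSpace ℝ (Fin N) => ⟪lam, x⟫)
      (innerSL ℝ lam) q := (innerSL ℝ lam).hasFDerivAt
  have h2 : HasFDerivAt (fun x : EuclideanSpace ℝ (Fin N) => ⟪x, x⟫)
      ((2 : ℝ) • innerSL ℝ q) q := by
    have := (hasFDerivAt_id q).inner ℝ (hasFDerivAt_id q)
    refine HasFDerivAt.congr_fderiv this ?_
    ext v
    simp only [ContinuousLinearMap.smul_apply, innerSL_apply_apply, ContinuousLinearMap.comp_apply,
      ContinuousLinearMap.prod_apply, ContinuousLinearMap.id_apply, id_eq, fderivInnerCLM_apply,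
      smul_eq_mul, two_mul]
    rw [real_inner_comm]
  have hF : HasFDerivAt (fun x : EuclideanSpace ℝ (Fin N) => (⟪lam, x⟫, ⟪x, x⟫))
      ((innerSL ℝ lam).prod ((2 : ℝ) • innerSL ℝ q)) q := h1.prodMk h2
  have hV : HasFDerivAt (fun x : EuclideanSpace ℝ (Fin N) => W (⟪lam, x⟫, ⟪x, x⟫))
      (D.comp ((innerSL ℝ lam).prod ((2 : ℝ) • innerSL ℝ q))) q :=
    ((hW _).hasFDerivAt.comp q hF)
  have hD : ∀ a b : ℝ, D (a, b) = a * D (1, 0) + b * D (0, 1) := by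
    intro a b
    have h : (a, b) = a • ((1 : ℝ), (0 : ℝ)) + b • ((0 : ℝ), (1 : ℝ)) := by
      simp [Prod.ext_iff]
    rw [h, map_add, map_smul, map_smul]; simp [smul_eq_mul]
  have hEq : D.comp (((innerSL ℝ) lam).prod ((2 : ℝ) • (innerSL ℝ) q))
      = (InnerProductSpace.toDual ℝ (EuclideanSpace ℝ (Fin N)))
          ((D (1, 0)) • lam + (2 * D (0, 1)) • q) := by
    ext v
    rw [InnerProductSpace.toDual_apply_apply, ContinuousLinearMap.comp_apply,
      ContinuousLinearMap.prod_apply, ContinuousLinearMap.smul_apply, innerSL_apply_apply,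
      innerSL_apply_apply, hD, inner_add_left, real_inner_smul_left, real_inner_smul_left,
      smul_eq_mul]
    ring
  rw [hEq] at hV
  have hgrad : HasGradientAt (fun x : EuclideanSpace ℝ (Fin N) => W (⟪lam, x⟫, ⟪x, x⟫))
      ((D (1, 0)) • lam + (2 * D (0, 1)) • q) q := by
    rw [hasGradientAt_iff_hasFDerivAt]; exact hV
  exact hgrad.gradient

theorem h6_closure_for_radial_plus_linear_potential (N : ℕ)
    (lam : EuclideanSpace ℝ (Fin N))
    (W : ℝ × ℝ → ℝ) (hW : Differentiable ℝ W) :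
    let M : ℝ := ⟪lam, lam⟫
    let V : EuclideanSpace ℝ (Fin N) → ℝ := fun q => W (⟪lam, q⟫, ⟪q, q⟫)
    ∀ q p : EuclideanSpace ℝ (Fin N),
      let W₁ : ℝ := fderiv ℝ W (⟪lam, q⟫, ⟪q, q⟫) (1, 0)
      let W₂ : ℝ := fderiv ℝ W (⟪lam, q⟫, ⟪q, q⟫) (0, 1)
      let q' : EuclideanSpace ℝ (Fin N) := gradient V q - p
      let p' : EuclideanSpace ℝ (Fin N) := q
      gradient V q = W₁ • lam + (2 * W₂) • q ∧
      ⟪lam, p'⟫ = ⟪lam, q⟫ ∧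
      ⟪p', p'⟫ = ⟪q, q⟫ ∧
      ⟪lam, q'⟫ = M * W₁ + 2 * ⟪lam, q⟫ * W₂ - ⟪lam, p⟫ ∧
      ⟪q', q'⟫ = M * W₁ ^ 2 + 4 * ⟪lam, q⟫ * W₁ * W₂ + 4 * ⟪q, q⟫ * W₂ ^ 2
          - 2 * ⟪lam, p⟫ * W₁ - 4 * ⟪q, p⟫ * W₂ + ⟪p, p⟫ ∧
      ⟪q', p'⟫ - M / 2
        = -(⟪q, p⟫ - M / 2) + ⟪lam, q⟫ * W₁ + 2 * ⟪q, q⟫ * W₂ - M := by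
  intro M V q p W₁ W₂ q' p'
  have hg : gradient V q = W₁ • lam + (2 * W₂) • q := grad_aux N lam W hW q
  refine ⟨hg, rfl, rfl, ?_, ?_, ?_⟩
  · simp only [q', hg, inner_sub_right, inner_add_right, real_inner_smul_right]
    simp only [M]
    ring
  · simp only [q', hg, inner_sub_left, inner_sub_right, inner_add_left, inner_add_right,
      real_inner_smul_left, real_inner_smul_right, M]
    have h1 : ⟪q, lam⟫ = ⟪lam, q⟫ := real_inner_comm _ _
    have h2 : ⟪p, lam⟫ = ⟪lam, p⟫ := real_inner_comm _ _
    have h3 : ⟪p, q⟫ = ⟪q, p⟫ := real_inner_comm _ _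
    rw [h1, h2, h3]
    ring
  · simp only [q', p', hg, inner_sub_left, inner_add_left, real_inner_smul_left, M]
    have h1 : ⟪lam, q⟫ = ⟪lam, q⟫ := rfl
    have h3 : ⟪p, q⟫ = ⟪q, p⟫ := real_inner_comm _ _
    rw [h3]
    ring
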